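/- For all r ∈ (0,1) and all nonnegative integers p, L(r,p)² + L(r',-p)² = 1, where L(r,p) denotes the ascending Landen sequence of r and L(r',-p) denotes the descending Landen sequence of r' = √(1-r²). -/

import Mathlib

/-- Descending Landen sequence: `descL r p = L(r,-p)`. -/
noncomputable def descL (r : ℝ) : ℕ → ℝ
  | 0 => r
  | p + 1 => (descL r p / (1 + Real.sqrt (1 - (descL r p) ^ 2))) ^ 2

/-- Ascending Landen sequence: `ascL r p = L(r,p)`. -/
noncomputable def ascL (r : ℝ) : ℕ → ℝ
  | 0 => r
  | p + 1 => 2 * Real.sqrt (ascL r p) / (1 + ascL r p)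

lemma landen_key (r : ℝ) (hr : r ∈ Set.Ioo (0:ℝ) 1) (p : ℕ) :
    0 < ascL r p ∧ 0 < descL (Real.sqrt (1 - r ^ 2)) p ∧
      ascL r p ^ 2 + descL (Real.sqrt (1 - r ^ 2)) p ^ 2 = 1 := by
  obtain ⟨hr0, hr1⟩ := hr
  induction p with
  | zero =>
    have h1 : (0:ℝ) ≤ 1 - r ^ 2 := by nlinarith
    have h2 : (0:ℝ) < 1 - r ^ 2 := by nlinarith
    refine ⟨hr0, Real.sqrt_pos.mpr h2, ?_⟩
    rw [ascL, descL, Real.sq_sqrt h1]; ring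
  | succ p ih =>
    obtain ⟨ha, hb, hab⟩ := ih
    set a := ascL r p with hadef
    set b := descL (Real.sqrt (1 - r ^ 2)) p with hbdef
    have hs : Real.sqrt (1 - b ^ 2) = a := by
      have : 1 - b ^ 2 = a ^ 2 := by linarith
      rw [this, Real.sqrt_sq ha.le]
    have hsa : Real.sqrt a ^ 2 = a := Real.sq_sqrt ha.le
    have hsapos : 0 < Real.sqrt a := Real.sqrt_pos.mpr ha
    have h1a : (0:ℝ) < 1 + a := by linarith
    have hA : ascL r (p + 1) = 2 * Real.sqrt a / (1 + a) := by rw [ascL]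
    have hB : descL (Real.sqrt (1 - r ^ 2)) (p + 1) = (b / (1 + a)) ^ 2 := by
      rw [descL, hs]
    refine ⟨by rw [hA]; positivity, by rw [hB]; positivity, ?_⟩
    rw [hA, hB]
    have hb2 : b ^ 2 = 1 - a ^ 2 := by linarith
    field_simp
    linear_combination 4 * (1 + a) ^ 2 * hsa + (b ^ 2 + 1 - a ^ 2) * hb2

theorem ascL_sq_add_descL_sq (r : ℝ) (hr : r ∈ Set.Ioo (0:ℝ) 1) (p : ℕ) :
    ascL r p ^ 2 + descL (Real.sqrt (1 - r ^ 2)) p ^ 2 = 1 := by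
  exact (landen_key r hr p).2.2
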